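/- There exists a simplicial map of degree 1 from the 10-vertex (minimal) triangulation of the closed orientable genus 2 surface onto the 7-vertex triangulation of the torus. -/

import Mathlib

/-!
A combinatorial model of (coherently oriented) triangulations of closed
orientable surfaces.  A triangulation is recorded by its set `F` of *oriented*
facets: ordered triples of distinct vertices, closed under cyclic rotation,
such that every directed edge lies in exactly one oriented facet (this is
exactly a coherent orientation of a closed triangulated surface), with no
isolated vertices, connected, and with connected vertex links (so the
underlying polyhedron is a closed surface).
-/
structure OSurf (V : Type) [DecidableEq V] [Fintype V] : Type where
  F : Finset (V × V × V)
  rot_mem : ∀ a b c, (a, b, c) ∈ F → (b, c, a) ∈ F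
  nondegen : ∀ a b c, (a, b, c) ∈ F → a ≠ b ∧ b ≠ c ∧ a ≠ c
  dart_unique : ∀ a b c c', (a, b, c) ∈ F → (a, b, c') ∈ F → c = c'
  dart_rev : ∀ a b c, (a, b, c) ∈ F → ∃ c', (b, a, c') ∈ F
  vertex_cover : ∀ v : V, ∃ b c, (v, b, c) ∈ F
  connected : ∀ x ∈ F, ∀ y ∈ F,
    Relation.ReflTransGen (fun s t : V × V × V => s ∈ F ∧ t ∈ F ∧
      2 ≤ (({s.1, s.2.1, s.2.2} : Finset V) ∩ {t.1, t.2.1, t.2.2}).card) x y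
  link_connected : ∀ v : V, ∀ x ∈ F, ∀ y ∈ F,
    v ∈ ({x.1, x.2.1, x.2.2} : Finset V) → v ∈ ({y.1, y.2.1, y.2.2} : Finset V) →
    Relation.ReflTransGen (fun s t : V × V × V => s ∈ F ∧ t ∈ F ∧
      v ∈ ({s.1, s.2.1, s.2.2} : Finset V) ∧ v ∈ ({t.1, t.2.1, t.2.2} : Finset V) ∧
      2 ≤ (({s.1, s.2.1, s.2.2} : Finset V) ∩ {t.1, t.2.1, t.2.2}).card) x y

variable {V W : Type} [DecidableEq V] [Fintype V] [DecidableEq W] [Fintype W]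

/-- The (unoriented) triangles of the triangulation. -/
def OSurf.faces (K : OSurf V) : Finset (Finset V) :=
  K.F.image fun x => {x.1, x.2.1, x.2.2}

/-- The edges of the triangulation. -/
def OSurf.edges (K : OSurf V) : Finset (Finset V) :=
  K.faces.biUnion fun t => Finset.powersetCard 2 t

/-- `K` triangulates the closed orientable surface of genus `g`, recorded via the
Euler characteristic `n - e + f = 2 - 2g`. -/
def OSurf.genusIs (K : OSurf V) (g : ℕ) : Prop :=
  (Fintype.card V : ℤ) - K.edges.card + K.faces.card = 2 - 2 * g

/-- `φ` is a simplicial map from `K` to `L`: the image of every face of `K` is a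
face of `L` (possibly of lower dimension). -/
def IsSimplicialMap (K : OSurf V) (L : OSurf W) (φ : V → W) : Prop :=
  ∀ x ∈ K.F, ∃ t ∈ L.faces, ({φ x.1, φ x.2.1, φ x.2.2} : Finset W) ⊆ t

/-- `φ : K → L` has degree `d`: for every oriented facet `σ` of `L`, the number of
facets of `K` mapped onto `σ` preserving orientation minus the number mapped onto
`σ` reversing orientation equals `d` (the algebraic count `alg σ`, which computes
the homological degree `f₂([K]) = d·[L]`). -/
def HasDegree (K : OSurf V) (L : OSurf W) (φ : V → W) (d : ℤ) : Prop :=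
  ∀ p q r, (p, q, r) ∈ L.F →
    ((K.F.filter fun x => (φ x.1, φ x.2.1, φ x.2.2) = (p, q, r)).card : ℤ) -
      ((K.F.filter fun x => (φ x.1, φ x.2.1, φ x.2.2) = (p, r, q)).card : ℤ) = d

/-- The coherently oriented facets of the unique `7`-vertex triangulation of the
torus (vertices `1,…,7`, where `7 = 0` in `Fin 7`): the `14` facets
`124, 245, 235, 356, 156, 126, 267, 237, 137, 157, 457, 467, 346, 134`,
each taken with its coherent orientation (with `[1,2,4]` positively oriented),
closed under cyclic rotation. -/
def torusPos : Finset (Fin 7 × Fin 7 × Fin 7) :=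
  {(1,2,4), (2,3,5), (3,4,6), (4,5,7), (5,6,1), (6,7,2), (7,1,3),
   (1,4,3), (2,5,4), (3,6,5), (4,7,6), (5,1,7), (6,2,1), (7,3,2)}

def torusF : Finset (Fin 7 × Fin 7 × Fin 7) :=
  torusPos ∪ torusPos.image (fun x => (x.2.1, x.2.2, x.1)) ∪
    torusPos.image (fun x => (x.2.2, x.1, x.2.1))


/-- The facets of the (minimal) `10`-vertex triangulation of the closed
orientable genus `2` surface (vertices `1,…,10`, with `10 = 0` in `Fin 10`). -/
def genus2Faces : Finset (Finset (Fin 10)) :=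
  {{1,2,3},{1,2,4},{1,3,5},{1,4,6},{1,5,7},{1,6,8},{1,7,8},{2,3,6},{2,4,8},
   {2,5,6},{2,5,9},{2,7,8},{2,7,10},{2,9,10},{3,5,10},{3,6,8},{3,8,9},
   {3,9,10},{4,6,10},{4,7,9},{4,7,10},{4,8,9},{5,6,10},{5,7,9}}


set_option maxRecDepth 40000
set_option maxHeartbeats 4000000

section Cert
variable {α : Type*} [DecidableEq α]

/-- Certificate checker: a list of (parent, child) pairs forming a spanning tree. -/
def certOK (r : α → α → Bool) : List α → List (α × α) → Bool
  | _, [] => true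
  | acc, (p, c) :: rest => (decide (p ∈ acc) && r p c) && certOK r (c :: acc) rest

theorem certOK_sound (r : α → α → Bool) (l : List α) (x₀ : α) :
    ∀ (cert : List (α × α)) (acc : List α),
      (∀ a ∈ acc, a ∈ l ∧
        Relation.ReflTransGen (fun a b => a ∈ l ∧ b ∈ l ∧ r a b = true) x₀ a) →
      (∀ pc ∈ cert, pc.2 ∈ l) →
      certOK r acc cert = true →
      ∀ y ∈ cert.map Prod.snd,
        Relation.ReflTransGen (fun a b => a ∈ l ∧ b ∈ l ∧ r a b = true) x₀ y := by
  intro cert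
  induction cert with
  | nil => intro acc _ _ _ y hy; simp at hy
  | cons pc rest ih =>
    intro acc hacc hsub hok y hy
    obtain ⟨p, c⟩ := pc
    simp only [certOK, Bool.and_eq_true, decide_eq_true_eq] at hok
    obtain ⟨⟨hp, hr⟩, hrest⟩ := hok
    have hcl : c ∈ l := hsub (p, c) (List.mem_cons_self)
    have hc : Relation.ReflTransGen (fun a b => a ∈ l ∧ b ∈ l ∧ r a b = true) x₀ c :=
      (hacc p hp).2.tail ⟨(hacc p hp).1, hcl, hr⟩
    have hacc' : ∀ a ∈ c :: acc, a ∈ l ∧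
        Relation.ReflTransGen (fun a b => a ∈ l ∧ b ∈ l ∧ r a b = true) x₀ a := by
      intro a ha
      rcases List.mem_cons.mp ha with h | h
      · subst h; exact ⟨hcl, hc⟩
      · exact hacc a h
    rw [List.map_cons] at hy
    rcases List.mem_cons.mp hy with h | h
    · subst h; exact hc
    · exact ih (c :: acc) hacc' (fun pc h => hsub pc (List.mem_cons_of_mem _ h)) hrest y h

theorem conn_of_cert (r : α → α → Bool)
    (hsym : Symmetric fun a b : α => r a b = true)
    (x₀ : α) (cert : List (α × α))
    (hok : certOK r [x₀] cert = true) :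
    ∀ x ∈ x₀ :: cert.map Prod.snd, ∀ y ∈ x₀ :: cert.map Prod.snd,
      Relation.ReflTransGen
        (fun a b => a ∈ (x₀ :: cert.map Prod.snd) ∧ b ∈ (x₀ :: cert.map Prod.snd) ∧
          r a b = true) x y := by
  set l := x₀ :: cert.map Prod.snd with hl
  have hsym' : Symmetric fun a b : α => a ∈ l ∧ b ∈ l ∧ r a b = true := by
    rintro a b ⟨ha, hb, hr⟩; exact ⟨hb, ha, hsym hr⟩
  have hreach : ∀ y ∈ l,
      Relation.ReflTransGen (fun a b => a ∈ l ∧ b ∈ l ∧ r a b = true) x₀ y := by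
    intro y hy
    rcases List.mem_cons.mp hy with h | h
    · subst h; exact .refl
    · refine certOK_sound r l x₀ cert [x₀] ?_ ?_ hok y h
      · intro a ha
        rcases List.mem_cons.mp ha with h' | h'
        · subst h'; exact ⟨List.mem_cons_self, .refl⟩
        · simp at h'
      · intro pc hpc; exact List.mem_cons_of_mem _ (List.mem_map_of_mem hpc)
  intro x hx y hy
  exact ((@Relation.ReflTransGen.symmetric _ (fun a b : α => a ∈ l ∧ b ∈ l ∧ r a b = true) ⟨fun a b h => hsym' h⟩).symm _ _ (hreach x hx)).trans (hreach y hy)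

end Cert

section Lift
variable {α : Type*}

theorem ball_of_all {l : List α} {p : α → Prop} [DecidablePred p]
    (h : (l.all fun x => decide (p x)) = true) : ∀ x ∈ l, p x := fun x hx =>
  of_decide_eq_true (List.all_eq_true.mp h x hx)

theorem bex_of_any {l : List α} {p : α → Prop} [DecidablePred p]
    (h : (l.any fun x => decide (p x)) = true) : ∃ x ∈ l, p x := by
  obtain ⟨x, hx, hp⟩ := List.any_eq_true.mp h
  exact ⟨x, hx, of_decide_eq_true hp⟩

end Lift

def a0 : Fin 10 := ⟨0, by decide⟩
def a1 : Fin 10 := ⟨1, by decide⟩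
def a2 : Fin 10 := ⟨2, by decide⟩
def a3 : Fin 10 := ⟨3, by decide⟩
def a4 : Fin 10 := ⟨4, by decide⟩
def a5 : Fin 10 := ⟨5, by decide⟩
def a6 : Fin 10 := ⟨6, by decide⟩
def a7 : Fin 10 := ⟨7, by decide⟩
def a8 : Fin 10 := ⟨8, by decide⟩
def a9 : Fin 10 := ⟨9, by decide⟩
def b0 : Fin 7 := ⟨0, by decide⟩
def b1 : Fin 7 := ⟨1, by decide⟩
def b2 : Fin 7 := ⟨2, by decide⟩
def b3 : Fin 7 := ⟨3, by decide⟩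
def b4 : Fin 7 := ⟨4, by decide⟩
def b5 : Fin 7 := ⟨5, by decide⟩
def b6 : Fin 7 := ⟨6, by decide⟩

abbrev T10 := Fin 10 × Fin 10 × Fin 10
abbrev T7 := Fin 7 × Fin 7 × Fin 7

def g2L : List T10 :=
  [(a0,a2,a7), (a0,a3,a9), (a0,a4,a6), (a0,a5,a3), (a0,a6,a5), (a0,a7,a4), (a0,a9,a2), (a1,a2,a3), (a1,a3,a5), (a1,a4,a2), (a1,a5,a7), (a1,a6,a4), (a1,a7,a8), (a1,a8,a6), (a2,a0,a9), (a2,a1,a4), (a2,a3,a1), (a2,a4,a8), (a2,a5,a6), (a2,a6,a3), (a2,a7,a0), (a2,a8,a7), (a2,a9,a5), (a3,a0,a5), (a3,a1,a2), (a3,a2,a6), (a3,a5,a1), (a3,a6,a8), (a3,a8,a9), (a3,a9,a0), (a4,a0,a7), (a4,a1,a6), (a4,a2,a1), (a4,a6,a0), (a4,a7,a9), (a4,a8,a2), (a4,a9,a8), (a5,a0,a6), (a5,a1,a3), (a5,a2,a9), (a5,a3,a0), (a5,a6,a2), (a5,a7,a1), (a5,a9,a7), (a6,a0,a4), (a6,a1,a8),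 (a6,a2,a5), (a6,a3,a2), (a6,a4,a1), (a6,a5,a0), (a6,a8,a3), (a7,a0,a2), (a7,a1,a5), (a7,a2,a8), (a7,a4,a0), (a7,a5,a9), (a7,a8,a1), (a7,a9,a4), (a8,a1,a7), (a8,a2,a4), (a8,a3,a6), (a8,a4,a9), (a8,a6,a1), (a8,a7,a2), (a8,a9,a3), (a9,a0,a3), (a9,a2,a0), (a9,a3,a8), (a9,a4,a7), (a9,a5,a2), (a9,a7,a5), (a9,a8,a4)]

def g2F : Finset T10 := ⟨(g2L : Multiset T10), by decide +kernel⟩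

theorem mem_g2F {x : T10} : x ∈ g2F ↔ x ∈ g2L := by
  simp [g2F]

/-- vertex set of an oriented facet -/
abbrev vts (x : T10) : Finset (Fin 10) := {x.1, x.2.1, x.2.2}

def rC : T10 → T10 → Bool := fun s t => decide (2 ≤ ((vts s) ∩ vts t).card)

def rL (v : Fin 10) : T10 → T10 → Bool := fun s t =>
  decide (v ∈ vts s ∧ v ∈ vts t ∧ 2 ≤ ((vts s) ∩ vts t).card)

theorem rC_symm : Symmetric fun a b : T10 => rC a b = true := by
  intro a b h
  simp only [rC, decide_eq_true_eq] at *
  rwa [Finset.inter_comm]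

theorem rL_symm (v : Fin 10) : Symmetric fun a b : T10 => rL v a b = true := by
  intro a b h
  simp only [rL, decide_eq_true_eq] at *
  exact ⟨h.2.1, h.1, by rw [Finset.inter_comm]; exact h.2.2⟩

def certC : List (T10 × T10) := [((a0,a2,a7),(a0,a7,a4)), ((a0,a2,a7),(a0,a9,a2)), ((a0,a2,a7),(a2,a0,a9)), ((a0,a2,a7),(a2,a7,a0)), ((a0,a2,a7),(a2,a8,a7)), ((a0,a9,a2),(a2,a9,a5)), ((a0,a9,a2),(a3,a9,a0)), ((a0,a2,a7),(a4,a0,a7)), ((a0,a7,a4),(a4,a6,a0)), ((a0,a7,a4),(a4,a7,a9)), ((a2,a8,a7),(a4,a8,a2)), ((a4,a7,a9),(a4,a9,a8)), ((a4,a6,a0),(a5,a0,a6)), ((a0,a9,a2),(a5,a2,a9)), ((a3,a9,a0),(a5,a3,a0)), ((a2,a9,a5),(a5,a6,a2)), ((a2,a9,a5),(a5,a9,a7)), ((a0,a7,a4),(a6,a0,a4)), ((a2,a9,a5),(a6,a2,a5)), ((a5,a6,a2),(a6,a3,a2)), ((a4,a6,a0),(a6,a4,a1)), ((a4,a6,a0),(a6,a5,a0)),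 ((a6,a3,a2),(a6,a8,a3)), ((a0,a2,a7),(a7,a0,a2)), ((a5,a9,a7),(a7,a1,a5)), ((a0,a2,a7),(a7,a2,a8)), ((a0,a2,a7),(a7,a4,a0)), ((a2,a9,a5),(a7,a5,a9)), ((a2,a8,a7),(a7,a8,a1)), ((a0,a7,a4),(a7,a9,a4)), ((a2,a8,a7),(a8,a1,a7)), ((a2,a8,a7),(a8,a2,a4)), ((a6,a3,a2),(a8,a3,a6)), ((a4,a7,a9),(a8,a4,a9)), ((a6,a4,a1),(a8,a6,a1)), ((a0,a2,a7),(a8,a7,a2)), ((a3,a9,a0),(a8,a9,a3)), ((a0,a9,a2),(a9,a0,a3)), ((a0,a2,a7),(a9,a2,a0)), ((a3,a9,a0),(a9,a3,a8)), ((a0,a7,a4),(a9,a4,a7)), ((a0,a9,a2),(a9,a5,a2)), ((a2,a9,a5),(a9,a7,a5)), ((a4,a7,a9),(a9,a8,a4)), ((a0,a9,a2),(a0,a3,a9)), ((a0,a7,a4),(a0,a4,a6)), ((a3,a9,a0),(a0,a5,a3)), ((a4,a6,a0),(a0,a6,a5)), ((a6,a3,a2),(a1,a2,a3)), ((a5,a3,a0),(a1,a3,a5)),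 ((a4,a8,a2),(a1,a4,a2)), ((a5,a9,a7),(a1,a5,a7)), ((a4,a6,a0),(a1,a6,a4)), ((a2,a8,a7),(a1,a7,a8)), ((a6,a4,a1),(a1,a8,a6)), ((a4,a8,a2),(a2,a1,a4)), ((a6,a3,a2),(a2,a3,a1)), ((a2,a8,a7),(a2,a4,a8)), ((a2,a9,a5),(a2,a5,a6)), ((a5,a6,a2),(a2,a6,a3)), ((a3,a9,a0),(a3,a0,a5)), ((a6,a3,a2),(a3,a1,a2)), ((a5,a6,a2),(a3,a2,a6)), ((a5,a3,a0),(a3,a5,a1)), ((a6,a3,a2),(a3,a6,a8)), ((a3,a9,a0),(a3,a8,a9)), ((a4,a6,a0),(a4,a1,a6)), ((a4,a8,a2),(a4,a2,a1)), ((a5,a3,a0),(a5,a1,a3)), ((a5,a9,a7),(a5,a7,a1)), ((a6,a4,a1),(a6,a1,a8))]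
def certL0 : List (T10 × T10) := [((a0,a2,a7),(a0,a7,a4)), ((a0,a2,a7),(a0,a9,a2)), ((a0,a2,a7),(a2,a0,a9)), ((a0,a2,a7),(a2,a7,a0)), ((a0,a9,a2),(a3,a9,a0)), ((a0,a2,a7),(a4,a0,a7)), ((a0,a7,a4),(a4,a6,a0)), ((a4,a6,a0),(a5,a0,a6)), ((a3,a9,a0),(a5,a3,a0)), ((a0,a7,a4),(a6,a0,a4)), ((a4,a6,a0),(a6,a5,a0)), ((a0,a2,a7),(a7,a0,a2)), ((a0,a2,a7),(a7,a4,a0)), ((a0,a9,a2),(a9,a0,a3)), ((a0,a2,a7),(a9,a2,a0)), ((a0,a9,a2),(a0,a3,a9)), ((a0,a7,a4),(a0,a4,a6)), ((a3,a9,a0),(a0,a5,a3)), ((a4,a6,a0),(a0,a6,a5)), ((a3,a9,a0),(a3,a0,a5))]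
def certL1 : List (T10 × T10) := [((a1,a2,a3),(a1,a3,a5)), ((a1,a2,a3),(a1,a4,a2)), ((a1,a3,a5),(a1,a5,a7)), ((a1,a4,a2),(a1,a6,a4)), ((a1,a5,a7),(a1,a7,a8)), ((a1,a6,a4),(a1,a8,a6)), ((a1,a2,a3),(a2,a1,a4)), ((a1,a2,a3),(a2,a3,a1)), ((a1,a2,a3),(a3,a1,a2)), ((a1,a2,a3),(a3,a5,a1)), ((a1,a4,a2),(a4,a1,a6)), ((a1,a2,a3),(a4,a2,a1)), ((a1,a2,a3),(a5,a1,a3)), ((a1,a3,a5),(a5,a7,a1)), ((a1,a6,a4),(a6,a1,a8)), ((a1,a4,a2),(a6,a4,a1)), ((a1,a3,a5),(a7,a1,a5)), ((a1,a5,a7),(a7,a8,a1)), ((a1,a5,a7),(a8,a1,a7)), ((a1,a6,a4),(a8,a6,a1))]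
def certL2 : List (T10 × T10) := [((a0,a2,a7),(a0,a9,a2)), ((a0,a2,a7),(a2,a0,a9)), ((a0,a2,a7),(a2,a7,a0)), ((a0,a2,a7),(a2,a8,a7)), ((a0,a9,a2),(a2,a9,a5)), ((a2,a8,a7),(a4,a8,a2)), ((a0,a9,a2),(a5,a2,a9)), ((a2,a9,a5),(a5,a6,a2)), ((a2,a9,a5),(a6,a2,a5)), ((a5,a6,a2),(a6,a3,a2)), ((a0,a2,a7),(a7,a0,a2)), ((a0,a2,a7),(a7,a2,a8)), ((a2,a8,a7),(a8,a2,a4)), ((a0,a2,a7),(a8,a7,a2)), ((a0,a2,a7),(a9,a2,a0)), ((a0,a9,a2),(a9,a5,a2)), ((a6,a3,a2),(a1,a2,a3)), ((a4,a8,a2),(a1,a4,a2)), ((a4,a8,a2),(a2,a1,a4)), ((a6,a3,a2),(a2,a3,a1)), ((a2,a8,a7),(a2,a4,a8)), ((a2,a9,a5),(a2,a5,a6)), ((a5,a6,a2),(a2,a6,a3)), ((a6,a3,a2),(a3,a1,a2)), ((a5,a6,a2),(a3,a2,a6)), ((a4,a8,a2),(a4,a2,a1))]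
def certL3 : List (T10 × T10) := [((a0,a3,a9),(a0,a5,a3)), ((a0,a5,a3),(a1,a3,a5)), ((a1,a3,a5),(a2,a3,a1)), ((a2,a3,a1),(a2,a6,a3)), ((a0,a3,a9),(a3,a0,a5)), ((a1,a3,a5),(a3,a1,a2)), ((a2,a3,a1),(a3,a2,a6)), ((a0,a5,a3),(a3,a5,a1)), ((a2,a6,a3),(a3,a6,a8)), ((a0,a3,a9),(a3,a8,a9)), ((a0,a3,a9),(a3,a9,a0)), ((a0,a5,a3),(a5,a1,a3)), ((a0,a3,a9),(a5,a3,a0)), ((a2,a3,a1),(a6,a3,a2)), ((a2,a6,a3),(a6,a8,a3)), ((a2,a6,a3),(a8,a3,a6)), ((a0,a3,a9),(a8,a9,a3)), ((a0,a3,a9),(a9,a0,a3)), ((a0,a3,a9),(a9,a3,a8)), ((a1,a3,a5),(a1,a2,a3))]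
def certL4 : List (T10 × T10) := [((a0,a4,a6),(a0,a7,a4)), ((a0,a4,a6),(a1,a6,a4)), ((a1,a6,a4),(a2,a1,a4)), ((a2,a1,a4),(a2,a4,a8)), ((a0,a4,a6),(a4,a0,a7)), ((a0,a4,a6),(a4,a1,a6)), ((a1,a6,a4),(a4,a2,a1)), ((a0,a4,a6),(a4,a6,a0)), ((a0,a7,a4),(a4,a7,a9)), ((a2,a1,a4),(a4,a8,a2)), ((a2,a4,a8),(a4,a9,a8)), ((a0,a4,a6),(a6,a0,a4)), ((a0,a4,a6),(a6,a4,a1)), ((a0,a4,a6),(a7,a4,a0)), ((a0,a7,a4),(a7,a9,a4)), ((a2,a1,a4),(a8,a2,a4)), ((a2,a4,a8),(a8,a4,a9)), ((a0,a7,a4),(a9,a4,a7)), ((a2,a4,a8),(a9,a8,a4)), ((a1,a6,a4),(a1,a4,a2))]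
def certL5 : List (T10 × T10) := [((a0,a5,a3),(a0,a6,a5)), ((a0,a5,a3),(a1,a3,a5)), ((a1,a3,a5),(a1,a5,a7)), ((a0,a6,a5),(a2,a5,a6)), ((a2,a5,a6),(a2,a9,a5)), ((a0,a5,a3),(a3,a0,a5)), ((a0,a5,a3),(a3,a5,a1)), ((a0,a5,a3),(a5,a0,a6)), ((a0,a5,a3),(a5,a1,a3)), ((a2,a5,a6),(a5,a2,a9)), ((a0,a5,a3),(a5,a3,a0)), ((a0,a6,a5),(a5,a6,a2)), ((a1,a3,a5),(a5,a7,a1)), ((a1,a5,a7),(a5,a9,a7)), ((a0,a6,a5),(a6,a2,a5)), ((a0,a5,a3),(a6,a5,a0)), ((a1,a3,a5),(a7,a1,a5)), ((a1,a5,a7),(a7,a5,a9)), ((a2,a5,a6),(a9,a5,a2)), ((a1,a5,a7),(a9,a7,a5))]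
def certL6 : List (T10 × T10) := [((a0,a4,a6),(a0,a6,a5)), ((a0,a4,a6),(a1,a6,a4)), ((a1,a6,a4),(a1,a8,a6)), ((a0,a6,a5),(a2,a5,a6)), ((a2,a5,a6),(a2,a6,a3)), ((a2,a5,a6),(a3,a2,a6)), ((a1,a8,a6),(a3,a6,a8)), ((a0,a4,a6),(a4,a1,a6)), ((a0,a4,a6),(a4,a6,a0)), ((a0,a4,a6),(a5,a0,a6)), ((a0,a6,a5),(a5,a6,a2)), ((a0,a4,a6),(a6,a0,a4)), ((a1,a6,a4),(a6,a1,a8)), ((a0,a6,a5),(a6,a2,a5)), ((a2,a5,a6),(a6,a3,a2)), ((a0,a4,a6),(a6,a4,a1)), ((a0,a4,a6),(a6,a5,a0)), ((a1,a8,a6),(a6,a8,a3)), ((a1,a8,a6),(a8,a3,a6)), ((a1,a6,a4),(a8,a6,a1))]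
def certL7 : List (T10 × T10) := [((a0,a2,a7),(a0,a7,a4)), ((a0,a2,a7),(a2,a7,a0)), ((a0,a2,a7),(a2,a8,a7)), ((a0,a2,a7),(a4,a0,a7)), ((a0,a7,a4),(a4,a7,a9)), ((a4,a7,a9),(a5,a9,a7)), ((a0,a2,a7),(a7,a0,a2)), ((a5,a9,a7),(a7,a1,a5)), ((a0,a2,a7),(a7,a2,a8)), ((a0,a2,a7),(a7,a4,a0)), ((a4,a7,a9),(a7,a5,a9)), ((a2,a8,a7),(a7,a8,a1)), ((a0,a7,a4),(a7,a9,a4)), ((a2,a8,a7),(a8,a1,a7)), ((a0,a2,a7),(a8,a7,a2)), ((a0,a7,a4),(a9,a4,a7)), ((a4,a7,a9),(a9,a7,a5)), ((a5,a9,a7),(a1,a5,a7)), ((a2,a8,a7),(a1,a7,a8)), ((a5,a9,a7),(a5,a7,a1))]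
def certL8 : List (T10 × T10) := [((a1,a7,a8),(a1,a8,a6)), ((a1,a7,a8),(a2,a8,a7)), ((a1,a8,a6),(a3,a6,a8)), ((a3,a6,a8),(a3,a8,a9)), ((a2,a8,a7),(a4,a8,a2)), ((a3,a8,a9),(a4,a9,a8)), ((a1,a7,a8),(a6,a1,a8)), ((a1,a8,a6),(a6,a8,a3)), ((a1,a7,a8),(a7,a2,a8)), ((a1,a7,a8),(a7,a8,a1)), ((a1,a7,a8),(a8,a1,a7)), ((a2,a8,a7),(a8,a2,a4)), ((a1,a8,a6),(a8,a3,a6)), ((a3,a8,a9),(a8,a4,a9)), ((a1,a7,a8),(a8,a6,a1)), ((a1,a7,a8),(a8,a7,a2)), ((a3,a6,a8),(a8,a9,a3)), ((a3,a6,a8),(a9,a3,a8)), ((a3,a8,a9),(a9,a8,a4)), ((a2,a8,a7),(a2,a4,a8))]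
def certL9 : List (T10 × T10) := [((a0,a3,a9),(a0,a9,a2)), ((a0,a3,a9),(a2,a0,a9)), ((a0,a9,a2),(a2,a9,a5)), ((a0,a3,a9),(a3,a8,a9)), ((a0,a3,a9),(a3,a9,a0)), ((a3,a8,a9),(a4,a9,a8)), ((a0,a9,a2),(a5,a2,a9)), ((a2,a9,a5),(a5,a9,a7)), ((a2,a9,a5),(a7,a5,a9)), ((a4,a9,a8),(a7,a9,a4)), ((a3,a8,a9),(a8,a4,a9)), ((a0,a3,a9),(a8,a9,a3)), ((a0,a3,a9),(a9,a0,a3)), ((a0,a3,a9),(a9,a2,a0)), ((a0,a3,a9),(a9,a3,a8)), ((a4,a9,a8),(a9,a4,a7)), ((a0,a9,a2),(a9,a5,a2)), ((a2,a9,a5),(a9,a7,a5)), ((a3,a8,a9),(a9,a8,a4)), ((a4,a9,a8),(a4,a7,a9))]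

def lbase : Fin 10 → T10 :=
  ![(a0,a2,a7),(a1,a2,a3),(a0,a2,a7),(a0,a3,a9),(a0,a4,a6),(a0,a5,a3),(a0,a4,a6),(a0,a2,a7),(a1,a7,a8),(a0,a3,a9)]

def lcert : Fin 10 → List (T10 × T10) :=
  ![certL0, certL1, certL2, certL3, certL4, certL5, certL6, certL7, certL8, certL9]

-- list for the connected component certificate
def lC : List T10 := (a0,a2,a7) :: certC.map Prod.snd
def lV (v : Fin 10) : List T10 := lbase v :: (lcert v).map Prod.snd

theorem certC_ok : certOK rC [(a0,a2,a7)] certC = true := by decide +kernel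
theorem certL_ok : ∀ v : Fin 10, certOK (rL v) [lbase v] (lcert v) = true := by decide +kernel

theorem lC_sub : ∀ z ∈ lC, z ∈ g2F := fun z hz =>
  mem_g2F.mpr (ball_of_all (l := lC) (p := fun z : T10 => z ∈ g2L) (by decide +kernel) z hz)

theorem lC_cov : ∀ z ∈ g2F, z ∈ lC := fun z hz =>
  ball_of_all (l := g2L) (p := fun z : T10 => z ∈ lC) (by decide +kernel) z (mem_g2F.mp hz)

theorem lV_sub : ∀ v : Fin 10, ∀ z ∈ lV v, z ∈ g2F := by
  have h : ∀ v : Fin 10, ((lV v).all fun z => decide (z ∈ g2L)) = true := by decide +kernel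
  exact fun v z hz => mem_g2F.mpr (ball_of_all (h v) z hz)

theorem lV_cov : ∀ v : Fin 10, ∀ z ∈ g2F, v ∈ vts z → z ∈ lV v := by
  have h : ∀ v : Fin 10, (g2L.all fun z => decide (v ∈ vts z → z ∈ lV v)) = true := by
    decide +kernel
  exact fun v z hz => ball_of_all (h v) z (mem_g2F.mp hz)

theorem g2_rot : ∀ x ∈ g2L, (x.2.1, x.2.2, x.1) ∈ g2L :=
  ball_of_all (l := g2L) (p := fun x : T10 => (x.2.1, x.2.2, x.1) ∈ g2L) (by decide +kernel)

theorem g2_nondegen : ∀ x ∈ g2L, x.1 ≠ x.2.1 ∧ x.2.1 ≠ x.2.2 ∧ x.1 ≠ x.2.2 :=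
  ball_of_all (l := g2L) (p := fun x : T10 => x.1 ≠ x.2.1 ∧ x.2.1 ≠ x.2.2 ∧ x.1 ≠ x.2.2) (by decide +kernel)

theorem g2_unique : ∀ x ∈ g2L, ∀ y ∈ g2L,
    x.1 = y.1 → x.2.1 = y.2.1 → x.2.2 = y.2.2 := by
  have h : ∀ x ∈ g2L,
      (g2L.all fun y => decide (x.1 = y.1 → x.2.1 = y.2.1 → x.2.2 = y.2.2)) = true :=
    ball_of_all (l := g2L) (p := fun x : T10 =>
      (g2L.all fun y => decide (x.1 = y.1 → x.2.1 = y.2.1 → x.2.2 = y.2.2)) = true)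
      (by decide +kernel)
  exact fun x hx => ball_of_all (h x hx)

theorem g2_rev : ∀ x ∈ g2L, ∃ y ∈ g2L, y.1 = x.2.1 ∧ y.2.1 = x.1 := by
  have h : ∀ x ∈ g2L,
      (g2L.any fun y => decide (y.1 = x.2.1 ∧ y.2.1 = x.1)) = true :=
    ball_of_all (l := g2L) (p := fun x : T10 =>
      (g2L.any fun y => decide (y.1 = x.2.1 ∧ y.2.1 = x.1)) = true) (by decide +kernel)
  exact fun x hx => bex_of_any (h x hx)

theorem g2_cover : ∀ v : Fin 10, ∃ x ∈ g2L, x.1 = v := by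
  have h : ∀ v : Fin 10, (g2L.any fun x => decide (x.1 = v)) = true := by decide +kernel
  exact fun v => bex_of_any (h v)

def K2 : OSurf (Fin 10) where
  F := g2F
  rot_mem := fun a b c h => mem_g2F.mpr (g2_rot _ (mem_g2F.mp h))
  nondegen := fun a b c h => g2_nondegen _ (mem_g2F.mp h)
  dart_unique := fun a b c c' h h' =>
    g2_unique _ (mem_g2F.mp h) _ (mem_g2F.mp h') rfl rfl
  dart_rev := by
    intro a b c h
    obtain ⟨⟨p, q, s⟩, hy, h1, h2⟩ := g2_rev _ (mem_g2F.mp h)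
    dsimp at h1 h2
    subst h1; subst h2
    exact ⟨s, mem_g2F.mpr hy⟩
  vertex_cover := by
    intro v
    obtain ⟨⟨p, q, s⟩, hx, h1⟩ := g2_cover v
    dsimp at h1
    subst h1
    exact ⟨q, s, mem_g2F.mpr hx⟩
  connected := by
    intro x hx y hy
    have key := conn_of_cert rC rC_symm (a0,a2,a7) certC certC_ok x
      (lC_cov x hx) y (lC_cov y hy)
    refine Relation.ReflTransGen.mono ?_ _ _ key
    rintro a b ⟨ha, hb, hr⟩
    exact ⟨lC_sub a ha, lC_sub b hb, of_decide_eq_true hr⟩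
  link_connected := by
    intro v x hx y hy hvx hvy
    have key := conn_of_cert (rL v) (rL_symm v) (lbase v) (lcert v) (certL_ok v) x
      (lV_cov v x hx hvx) y (lV_cov v y hy hvy)
    refine Relation.ReflTransGen.mono ?_ _ _ key
    rintro a b ⟨ha, hb, hr⟩
    have hr' := of_decide_eq_true hr
    exact ⟨lV_sub v a ha, lV_sub v b hb, hr'.1, hr'.2.1, hr'.2.2⟩

def tL : List T7 := [(b0,b1,b3), (b0,b2,b6), (b0,b3,b2), (b0,b4,b5), (b0,b5,b1), (b0,b6,b4), (b1,b0,b5), (b1,b2,b4), (b1,b3,b0), (b1,b4,b3), (b1,b5,b6), (b1,b6,b2), (b2,b0,b3), (b2,b1,b6), (b2,b3,b5), (b2,b4,b1), (b2,b5,b4), (b2,b6,b0), (b3,b0,b1), (b3,b1,b4), (b3,b2,b0), (b3,b4,b6), (b3,b5,b2), (b3,b6,b5), (b4,b0,b6), (b4,b1,b2), (b4,b2,b5), (b4,b3,b1), (b4,b5,b0), (b4,b6,b3), (b5,b0,b4), (b5,b1,b0), (b5,b2,b3), (b5,b3,b6), (b5,b4,b2), (b5,b6,b1), (b6,b0,b2),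 (b6,b1,b5), (b6,b2,b1), (b6,b3,b4), (b6,b4,b0), (b6,b5,b3)]

def tF : Finset T7 := ⟨(tL : Multiset T7), by decide +kernel⟩

theorem htF : torusF = tF := by decide +kernel

theorem mem_tF {x : T7} : x ∈ tF ↔ x ∈ tL := by simp [tF]

def tFL : List (Finset (Fin 7)) :=
  [{b0,b1,b3}, {b0,b1,b5}, {b0,b2,b3}, {b0,b2,b6}, {b0,b4,b5}, {b0,b4,b6}, {b1,b2,b4}, {b1,b2,b6}, {b1,b3,b4}, {b1,b5,b6}, {b2,b3,b5}, {b2,b4,b5}, {b3,b4,b6}, {b3,b5,b6}]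

def tFaces : Finset (Finset (Fin 7)) := ⟨(tFL : Multiset (Finset (Fin 7))), by decide +kernel⟩

theorem mem_tFaces {t : Finset (Fin 7)} : t ∈ tFaces ↔ t ∈ tFL := by simp [tFaces]

theorem h_tFaces : tF.image (fun x : T7 => ({x.1, x.2.1, x.2.2} : Finset (Fin 7))) = tFaces := by
  decide +kernel

def phi : Fin 10 → Fin 7 := ![b6, b1, b2, b4, b6, b3, b5, b0, b0, b0]

theorem K2_faces : K2.faces = genus2Faces := by
  show g2F.image _ = genus2Faces
  decide +kernel

theorem K2_genus : K2.genusIs 2 := by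
  rw [OSurf.genusIs]
  rw [OSurf.edges, K2_faces]
  show (Fintype.card (Fin 10) : ℤ) - _ + (genus2Faces.card : ℤ) = _
  decide +kernel

theorem phi_simplicial : ∀ x ∈ g2L,
    ∃ t ∈ tFaces, ({phi x.1, phi x.2.1, phi x.2.2} : Finset (Fin 7)) ⊆ t := by
  have h : ∀ x ∈ g2L,
      (tFL.any fun t =>
        decide (({phi x.1, phi x.2.1, phi x.2.2} : Finset (Fin 7)) ⊆ t)) = true :=
    ball_of_all (l := g2L) (p := fun x : T10 => (tFL.any fun t =>
      decide (({phi x.1, phi x.2.1, phi x.2.2} : Finset (Fin 7)) ⊆ t)) = true)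
      (by decide +kernel)
  intro x hx
  obtain ⟨t, ht, hsub⟩ := bex_of_any (h x hx)
  exact ⟨t, mem_tFaces.mpr ht, hsub⟩

theorem phi_degree : ∀ z ∈ tL,
    ((g2F.filter fun x => (phi x.1, phi x.2.1, phi x.2.2) = z).card : ℤ) -
      ((g2F.filter fun x => (phi x.1, phi x.2.1, phi x.2.2) = (z.1, z.2.2, z.2.1)).card : ℤ)
      = 1 :=
  ball_of_all (l := tL) (p := fun z : T7 =>
    ((g2F.filter fun x => (phi x.1, phi x.2.1, phi x.2.2) = z).card : ℤ) -
      ((g2F.filter fun x => (phi x.1, phi x.2.1, phi x.2.2) = (z.1, z.2.2, z.2.1)).card : ℤ)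
      = 1) (by decide +kernel)


/-- There is a simplicial map of degree `1` from the `10`-vertex
minimal triangulation of the genus `2` surface onto the `7`-vertex torus. -/
theorem stmt16 (T : OSurf (Fin 7)) (hT : T.F = torusF) :
    ∃ K : OSurf (Fin 10), K.faces = genus2Faces ∧ K.genusIs 2 ∧
      ∃ φ : Fin 10 → Fin 7, IsSimplicialMap K T φ ∧ HasDegree K T φ 1 := by
  refine ⟨K2, K2_faces, K2_genus, phi, ?_, ?_⟩
  · intro x hx
    have hfaces : T.faces = tFaces := by
      rw [OSurf.faces, hT, htF, h_tFaces]
    rw [hfaces]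
    exact phi_simplicial x (mem_g2F.mp hx)
  · intro p q r hpqr
    rw [hT, htF] at hpqr
    exact phi_degree (p, q, r) (mem_tF.mp hpqr)
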